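/- Let (M, E*) be a constrained matrix whose red-black graph G_RB has connected components G_1, …, G_k; each G_i corresponds to a constrained submatrix (M_i, E*_i) induced by the species and characters of G_i, with E*_i the restriction of E* to those pairs. If for every i the red-black graph of (M_i, E*_i) admits a successful c-reduction R_i, then the concatenation R_1 R_2 … R_k is a successful c-reduction of G_RB. -/

import Mathlib

/-! Common definitions for persistent perfect phylogeny formalizations. -/

/-- `AncRel parent i j` : node `i` is an ancestor (or equal to) node `j`
in the rooted tree given by the parent function. -/
def AncRel (parent : ℕ → ℕ) (i j : ℕ) : Prop := ∃ k : ℕ, parent^[k] j = i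

/-- A persistent perfect phylogeny (p-pp) for the binary matrix `M`.
Nodes are `0, …, n-1`, the root is `0`, and each non-root node `i` has
parent `parent i < i`; the (unique) edge entering `i` is identified with `i`. -/
structure PPTree (S C : Type*) (M : S → C → Bool) where
  n : ℕ
  n_pos : 0 < n
  parent : ℕ → ℕ
  parent_lt : ∀ i, 0 < i → i < n → parent i < i
  label : ℕ → C → Bool
  root_label : ∀ c, label 0 c = false
  /-- for each character there are at most two edges across which its state changes -/
  changes_le_two : ∀ c : C, ∀ i j k : ℕ,
    (0 < i ∧ i < n ∧ label (parent i) c ≠ label i c) →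
    (0 < j ∧ j < n ∧ label (parent j) c ≠ label j c) →
    (0 < k ∧ k < n ∧ label (parent k) c ≠ label k c) →
    i = j ∨ i = k ∨ j = k
  /-- two change edges of the same character lie on one root-to-leaf path,
  the higher one being the gain `c⁺` (0→1) and the lower one the loss `c⁻` (1→0) -/
  changes_on_path : ∀ c : C, ∀ i j : ℕ,
    (0 < i ∧ i < n ∧ label (parent i) c ≠ label i c) →
    (0 < j ∧ j < n ∧ label (parent j) c ≠ label j c) →
    i ≠ j →
    (AncRel parent i j ∧ label (parent i) c = false ∧ label i c = true ∧
      label (parent j) c = true ∧ label j c = false) ∨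
    (AncRel parent j i ∧ label (parent j) c = false ∧ label j c = true ∧
      label (parent i) c = true ∧ label i c = false)
  /-- if a character changes on exactly one edge, the change is a gain (0→1) -/
  single_change_gain : ∀ c : C, ∀ i : ℕ,
    (0 < i ∧ i < n ∧ label (parent i) c ≠ label i c) →
    (∀ j : ℕ, (0 < j ∧ j < n ∧ label (parent j) c ≠ label j c) → j = i) →
    (label (parent i) c = false ∧ label i c = true)
  /-- each row of `M` labels exactly one node of the tree -/
  rows_label : ∀ s : S, ∃! x : ℕ, x < n ∧ ∀ c, label x c = M s c

/-- Character `c` is persistent in the node `x`: the path from the root to `x`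
contains both an edge labeled `c⁺` and an edge labeled `c⁻`. -/
def PPTree.persistentAt {S C : Type*} {M : S → C → Bool} (T : PPTree S C M)
    (x : ℕ) (c : C) : Prop :=
  (∃ i, 0 < i ∧ i < T.n ∧ AncRel T.parent i x ∧
    T.label (T.parent i) c = false ∧ T.label i c = true) ∧
  (∃ j, 0 < j ∧ j < T.n ∧ AncRel T.parent j x ∧
    T.label (T.parent j) c = true ∧ T.label j c = false)

/-- A p-pp tree is consistent with the constraint set `E` if, for every
`(s,c) ∈ E`, the character `c` is not persistent in the species `s`. -/
def PPTree.consistent {S C : Type*} {M : S → C → Bool} (T : PPTree S C M)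
    (E : Set (S × C)) : Prop :=
  ∀ p ∈ E, ∀ x : ℕ, x < T.n → (∀ c, T.label x c = M p.1 c) →
    ¬ T.persistentAt x p.2

/-- Two (distinct) characters are in conflict when all four configurations
`(0,0), (0,1), (1,0), (1,1)` occur among the species. -/
def Conflicting {S C : Type*} (M : S → C → Bool) (c₁ c₂ : C) : Prop :=
  c₁ ≠ c₂ ∧
  (∃ s, M s c₁ = false ∧ M s c₂ = false) ∧
  (∃ s, M s c₁ = false ∧ M s c₂ = true) ∧
  (∃ s, M s c₁ = true ∧ M s c₂ = false) ∧
  (∃ s, M s c₁ = true ∧ M s c₂ = true)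

/-- The conflict graph of `M` is empty: no two characters are in conflict. -/
def EmptyConflictGraph {S C : Type*} (M : S → C → Bool) : Prop :=
  ∀ c₁ c₂ : C, ¬ Conflicting M c₁ c₂

/-- The column of a character, as a set of species. -/
def ColSet {S C : Type*} (M : S → C → Bool) (c : C) : Set S := {s | M s c = true}

/-- Column `c⁺` of the completion of the extended matrix of `(M,E)` determined by
the choice function `f` (the pair `(?,?)` of species `s` and character `c` is
completed to `(1,1)` iff `f s c` holds). -/
def ColPlus {S C : Type*} (M : S → C → Bool) (E : Set (S × C))
    (f : S → C → Prop) (c : C) : Set S :=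
  {s | M s c = true ∨ ((s, c) ∉ E ∧ M s c = false ∧ f s c)}

/-- Column `c⁻` of the completion of the extended matrix of `(M,E)` determined by `f`. -/
def ColMinus {S C : Type*} (M : S → C → Bool) (E : Set (S × C))
    (f : S → C → Prop) (c : C) : Set S :=
  {s | (s, c) ∉ E ∧ M s c = false ∧ f s c}

/-- The column of a signed character (`(c, true)` is `c⁺`, `(c, false)` is `c⁻`). -/
def ColOf {S C : Type*} (M : S → C → Bool) (E : Set (S × C))
    (f : S → C → Prop) : C × Bool → Set S :=
  fun p => if p.2 then ColPlus M E f p.1 else ColMinus M E f p.1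

/-- Two sets are laminar: disjoint or one contains the other. -/
def LaminarPair {S : Type*} (X Y : Set S) : Prop := X ∩ Y = ∅ ∨ X ⊆ Y ∨ Y ⊆ X

/-- The completion of the extended matrix of `(M,E)` given by `f` has pairwise
laminar columns, i.e. it admits a rooted (directed) perfect phylogeny. -/
def LaminarCompletion {S C : Type*} (M : S → C → Bool) (E : Set (S × C))
    (f : S → C → Prop) : Prop :=
  ∀ p q : C × Bool, LaminarPair (ColOf M E f p) (ColOf M E f q)

/-- The state of a character in a red-black graph. -/
inductive CharState : Type
  | inactive : CharState
  | active : CharState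
  | free : CharState
deriving DecidableEq

/-- A red-black graph: an edge-bicolored bipartite graph on species and
characters, together with a state for each character and a set of forbidden
(species, character) pairs. -/
structure RBGraph (S C : Type*) where
  black : S → C → Prop
  red : S → C → Prop
  charState : C → CharState
  forbidden : Set (S × C)

/-- The underlying simple graph of a red-black graph (edges of either color). -/
def RBGraph.graph {S C : Type*} (G : RBGraph S C) : SimpleGraph (S ⊕ C) where
  Adj v w :=
    (∃ s c, v = Sum.inl s ∧ w = Sum.inr c ∧ (G.black s c ∨ G.red s c)) ∨
    (∃ s c, w = Sum.inl s ∧ v = Sum.inr c ∧ (G.black s c ∨ G.red s c))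
  symm := ⟨fun v w h => Or.symm h⟩
  loopless := ⟨by
    rintro v (⟨s, c, h₁, h₂, -⟩ | ⟨s, c, h₁, h₂, -⟩) <;> subst h₁ <;> simp at h₂⟩

/-- The subgraph of a red-black graph formed by the red edges only. -/
def RBGraph.redGraph {S C : Type*} (G : RBGraph S C) : SimpleGraph (S ⊕ C) where
  Adj v w :=
    (∃ s c, v = Sum.inl s ∧ w = Sum.inr c ∧ G.red s c) ∨
    (∃ s c, w = Sum.inl s ∧ v = Sum.inr c ∧ G.red s c)
  symm := ⟨fun v w h => Or.symm h⟩
  loopless := ⟨by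
    rintro v (⟨s, c, h₁, h₂, -⟩ | ⟨s, c, h₁, h₂, -⟩) <;> subst h₁ <;> simp at h₂⟩

/-- The species `s` belongs to the connected component `𝒞(c)` of character `c`. -/
def RBGraph.reach {S C : Type*} (G : RBGraph S C) (c : C) (s : S) : Prop :=
  G.graph.Reachable (Sum.inr c) (Sum.inl s)

/-- The realization of character `c` is possible in `G`. -/
def RealizePossible {S C : Type*} (G : RBGraph S C) (c : C) : Prop :=
  match G.charState c with
  | CharState.inactive => ∀ s, G.reach c s → (s, c) ∉ G.forbidden
  | CharState.active => ∀ s, G.reach c s → G.red s c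
  | CharState.free => False

/-- The realization of character `c` in the red-black graph `G`.
If `c` is inactive: add a red edge `{s,c}` for every species `s ∈ 𝒞(c)` not
adjacent to `c`, delete all black edges incident to `c`, forbid `(s,c)` for all
`s ∉ 𝒞(c)`, and make `c` active.  If `c` is active: delete all red edges
incident to `c` and make `c` free. -/
def realize {S C : Type*} [DecidableEq C] (G : RBGraph S C) (c : C) : RBGraph S C :=
  match G.charState c with
  | CharState.inactive =>
    { black := fun s c' => G.black s c' ∧ c' ≠ c
      red := fun s c' =>
        if c' = c then G.red s c ∨ (G.reach c s ∧ ¬ G.black s c ∧ ¬ G.red s c)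
        else G.red s c'
      charState := fun c' => if c' = c then CharState.active else G.charState c'
      forbidden := G.forbidden ∪ {p | p.2 = c ∧ ¬ G.reach c p.1} }
  | CharState.active =>
    { black := G.black
      red := fun s c' => G.red s c' ∧ c' ≠ c
      charState := fun c' => if c' = c then CharState.free else G.charState c'
      forbidden := G.forbidden }
  | CharState.free => G

/-- Realize a sequence of characters, in order. -/
def realizeList {S C : Type*} [DecidableEq C] (G : RBGraph S C) : List C → RBGraph S C
  | [] => G
  | c :: l => realizeList (realize G c) l

/-- All realizations of the sequence, performed in order, are possible. -/
def AllPossible {S C : Type*} [DecidableEq C] (G : RBGraph S C) : List C → Prop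
  | [] => True
  | c :: l => RealizePossible G c ∧ AllPossible (realize G c) l

/-- The initial red-black graph of the constrained matrix `(M, E)`:
a black edge `{s,c}` iff `M s c = 1`, all characters inactive, forbidden set `E`. -/
def initRB {S C : Type*} (M : S → C → Bool) (E : Set (S × C)) : RBGraph S C :=
  { black := fun s c => M s c = true
    red := fun _ _ => False
    charState := fun _ => CharState.inactive
    forbidden := E }

/-- The red-black graph has no edges at all. -/
def Edgeless {S C : Type*} (G : RBGraph S C) : Prop :=
  ∀ (s : S) (c : C), ¬ G.black s c ∧ ¬ G.red s c

/-- A proper sequence of signed characters: each signed character occurs at most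
once, and `c⁻` occurs only after the corresponding `c⁺`. -/
def ProperSigned {C : Type*} [DecidableEq C] (R : List (C × Bool)) : Prop :=
  (∀ σ : C × Bool, R.count σ ≤ 1) ∧
  (∀ c : C, (c, false) ∈ R →
    ∃ i j : Fin R.length, (i : ℕ) < (j : ℕ) ∧ R.get i = (c, true) ∧ R.get j = (c, false))

/-- A successful c-reduction of the red-black graph of `(M, E)`: a proper signed
sequence containing `c⁺` for every character, all of whose realizations are
possible in order, and whose final red-black graph has no edges. -/
def SuccessfulCReduction {S C : Type*} [DecidableEq C] (M : S → C → Bool)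
    (E : Set (S × C)) (R : List (C × Bool)) : Prop :=
  ProperSigned R ∧ (∀ c : C, (c, true) ∈ R) ∧
  AllPossible (initRB M E) (R.map Prod.fst) ∧
  Edgeless (realizeList (initRB M E) (R.map Prod.fst))

/-- The canonical completion of the extended matrix of `(M,E)` associated with a
successful c-reduction `R`: at the first realization of each character `c`, the
pair of species `s` and character `c` is completed to `(1,1)` iff `s ∈ 𝒞(c)` at
that moment. -/
def canonComp {S C : Type*} [DecidableEq C] (M : S → C → Bool) (E : Set (S × C))
    (R : List (C × Bool)) : S → C → Prop :=
  fun s c =>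
    (realizeList (initRB M E)
      ((R.takeWhile (fun p => decide (p ≠ (c, true)))).map Prod.fst)).reach c s

/-- `L` is a label sequence of node `x` of the p-pp tree `T`: it lists, without
repetition and in root-to-`x` order, exactly the signed characters labeling the
edges on the path from the root to `x` (`(c, true)` stands for `c⁺`,
`(c, false)` for `c⁻`). -/
def IsLabelSeq {S C : Type*} {M : S → C → Bool} (T : PPTree S C M) (x : ℕ)
    (L : List (C × Bool)) : Prop :=
  L.Nodup ∧
  (∀ σ : C × Bool, σ ∈ L ↔ ∃ i, 0 < i ∧ i < T.n ∧ AncRel T.parent i x ∧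
    T.label (T.parent i) σ.1 = (!σ.2) ∧ T.label i σ.1 = σ.2) ∧
  (∀ p q : Fin L.length, (p : ℕ) < (q : ℕ) → ∀ i j : ℕ,
    (0 < i ∧ i < T.n ∧ AncRel T.parent i x ∧
      T.label (T.parent i) (L.get p).1 = (!(L.get p).2) ∧
      T.label i (L.get p).1 = (L.get p).2) →
    (0 < j ∧ j < T.n ∧ AncRel T.parent j x ∧
      T.label (T.parent j) (L.get q).1 = (!(L.get q).2) ∧
      T.label j (L.get q).1 = (L.get q).2) →
    AncRel T.parent i j)

/-- A solution of a General Character Compatibility instance (with all character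
trees equal to the directed path `0 → 1 → 2`). -/
structure GCCSolution (S C : Type*) (α : C → S → Set (Fin 3)) where
  n : ℕ
  n_pos : 0 < n
  parent : ℕ → ℕ
  parent_lt : ∀ i, 0 < i → i < n → parent i < i
  st : ℕ → C → Fin 3
  /-- every species has a node whose states belong to the prescribed sets -/
  species_node : ∀ s : S, ∃ v : ℕ, v < n ∧ ∀ c : C, st v c ∈ α c s
  /-- for each character and state, the nodes carrying that state induce a
  connected subtree: any two of them are joined by a path inside the set,
  through a common ancestor carrying the same state -/
  state_connected : ∀ (c : C) (q : Fin 3) (u v : ℕ), u < n → v < n →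
    st u c = q → st v c = q →
    ∃ r : ℕ, r < n ∧ st r c = q ∧ AncRel parent r u ∧ AncRel parent r v ∧
      (∀ w : ℕ, AncRel parent r w → AncRel parent w u → st w c = q) ∧
      (∀ w : ℕ, AncRel parent r w → AncRel parent w v → st w c = q)
  /-- along each edge a state is unchanged or moves one step along `0 → 1 → 2` -/
  edge_ok : ∀ (c : C) (i : ℕ), 0 < i → i < n →
    st (parent i) c = st i c ∨
    (st (parent i) c = 0 ∧ st i c = 1) ∨
    (st (parent i) c = 1 ∧ st i c = 2)

section Stmt10Aux

variable {S C : Type*} [DecidableEq C]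

/-- unfold `realize` when the character is inactive -/
lemma realize_inactive (G : RBGraph S C) (c : C) (h : G.charState c = CharState.inactive) :
    realize G c =
      { black := fun s c' => G.black s c' ∧ c' ≠ c
        red := fun s c' =>
          if c' = c then G.red s c ∨ (G.reach c s ∧ ¬ G.black s c ∧ ¬ G.red s c)
          else G.red s c'
        charState := fun c' => if c' = c then CharState.active else G.charState c'
        forbidden := G.forbidden ∪ {p | p.2 = c ∧ ¬ G.reach c p.1} } := by
  unfold realize; rw [h]

lemma realize_active (G : RBGraph S C) (c : C) (h : G.charState c = CharState.active) :
    realize G c =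
      { black := G.black
        red := fun s c' => G.red s c' ∧ c' ≠ c
        charState := fun c' => if c' = c then CharState.free else G.charState c'
        forbidden := G.forbidden } := by
  unfold realize; rw [h]

lemma realize_free (G : RBGraph S C) (c : C) (h : G.charState c = CharState.free) :
    realize G c = G := by
  unfold realize; rw [h]

lemma realizePossible_inactive (G : RBGraph S C) (c : C) (h : G.charState c = CharState.inactive) :
    RealizePossible G c ↔ ∀ s, G.reach c s → (s, c) ∉ G.forbidden := by
  unfold RealizePossible; rw [h]

lemma realizePossible_active (G : RBGraph S C) (c : C) (h : G.charState c = CharState.active) :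
    RealizePossible G c ↔ ∀ s, G.reach c s → G.red s c := by
  unfold RealizePossible; rw [h]

lemma realizePossible_free (G : RBGraph S C) (c : C) (h : G.charState c = CharState.free) :
    RealizePossible G c ↔ False := by
  unfold RealizePossible; rw [h]


set_option linter.unusedSectionVars false

variable (M : S → C → Bool) (E : Set (S × C))

/-- the component map of the initial red-black graph -/
abbrev rbk : S ⊕ C → (initRB M E).graph.ConnectedComponent :=
  (initRB M E).graph.connectedComponentMk

/-- all edges of `G` lie within components of the initial graph -/
def InvC (G : RBGraph S C) : Prop :=
  ∀ s c, (G.black s c ∨ G.red s c) → rbk M E (Sum.inl s) = rbk M E (Sum.inr c)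

variable (K : (initRB M E).graph.ConnectedComponent)

/-- `G` restricted to component `K` simulates `H` -/
def SimC (G : RBGraph S C)
    (H : RBGraph {s : S // rbk M E (Sum.inl s) = K} {c : C // rbk M E (Sum.inr c) = K}) :
    Prop :=
  (∀ (s : {s : S // rbk M E (Sum.inl s) = K}) (c : {c : C // rbk M E (Sum.inr c) = K}),
      (G.black s.1 c.1 ↔ H.black s c) ∧ (G.red s.1 c.1 ↔ H.red s c)) ∧
  (∀ c : {c : C // rbk M E (Sum.inr c) = K}, G.charState c.1 = H.charState c) ∧
  (∀ (s : {s : S // rbk M E (Sum.inl s) = K}) (c : {c : C // rbk M E (Sum.inr c) = K}),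
      G.charState c.1 = CharState.inactive →
      ((s.1, c.1) ∈ G.forbidden ↔ (s, c) ∈ H.forbidden))

def liftV : (v : S ⊕ C) → rbk M E v = K →
    ({s : S // rbk M E (Sum.inl s) = K} ⊕ {c : C // rbk M E (Sum.inr c) = K})
  | Sum.inl s, h => Sum.inl ⟨s, h⟩
  | Sum.inr c, h => Sum.inr ⟨c, h⟩

variable {M E K}

lemma comp_eq_of_adj {G : RBGraph S C} (hI : InvC M E G) {v w : S ⊕ C}
    (h : G.graph.Adj v w) : rbk M E v = rbk M E w := by
  rcases h with ⟨s, c, rfl, rfl, he⟩ | ⟨s, c, rfl, rfl, he⟩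
  · exact hI s c he
  · exact (hI s c he).symm

lemma comp_eq_of_reachable {G : RBGraph S C} (hI : InvC M E G) {v w : S ⊕ C}
    (h : G.graph.Reachable v w) : rbk M E v = rbk M E w := by
  obtain ⟨p⟩ := h
  induction p with
  | nil => rfl
  | cons h p ih => exact (comp_eq_of_adj hI h).trans ih

lemma walk_to_sub {G : RBGraph S C}
    {H : RBGraph {s : S // rbk M E (Sum.inl s) = K} {c : C // rbk M E (Sum.inr c) = K}}
    (hI : InvC M E G) (hS : SimC M E K G H) {v w : S ⊕ C} (p : G.graph.Walk v w) :
    ∀ hv : rbk M E v = K, ∃ hw : rbk M E w = K,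
      H.graph.Reachable (liftV M E K v hv) (liftV M E K w hw) := by
  induction p with
  | nil => exact fun hv => ⟨hv, SimpleGraph.Reachable.refl _⟩
  | @cons v u w h p ih =>
    intro hv
    have hu : rbk M E u = K := (comp_eq_of_adj hI h).symm.trans hv
    obtain ⟨hw, hr⟩ := ih hu
    refine ⟨hw, SimpleGraph.Reachable.trans (SimpleGraph.Adj.reachable ?_) hr⟩
    rcases h with ⟨s, c, hv', hu', he⟩ | ⟨s, c, hu', hv', he⟩
    · subst hv'; subst hu'
      exact Or.inl ⟨⟨s, hv⟩, ⟨c, hu⟩, rfl, rfl,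
        he.imp (fun hb => (hS.1 ⟨s, hv⟩ ⟨c, hu⟩).1.mp hb)
               (fun hb => (hS.1 ⟨s, hv⟩ ⟨c, hu⟩).2.mp hb)⟩
    · subst hv'; subst hu'
      exact Or.inr ⟨⟨s, hu⟩, ⟨c, hv⟩, rfl, rfl,
        he.imp (fun hb => (hS.1 ⟨s, hu⟩ ⟨c, hv⟩).1.mp hb)
               (fun hb => (hS.1 ⟨s, hu⟩ ⟨c, hv⟩).2.mp hb)⟩

lemma walk_from_sub {G : RBGraph S C}
    {H : RBGraph {s : S // rbk M E (Sum.inl s) = K} {c : C // rbk M E (Sum.inr c) = K}}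
    (hS : SimC M E K G H)
    {x y : {s : S // rbk M E (Sum.inl s) = K} ⊕ {c : C // rbk M E (Sum.inr c) = K}}
    (p : H.graph.Walk x y) :
    G.graph.Reachable (Sum.map Subtype.val Subtype.val x) (Sum.map Subtype.val Subtype.val y) := by
  induction p with
  | nil => exact SimpleGraph.Reachable.refl _
  | @cons x u y h p ih =>
    refine SimpleGraph.Reachable.trans (SimpleGraph.Adj.reachable ?_) ih
    rcases h with ⟨s, c, hx', hu', he⟩ | ⟨s, c, hu', hx', he⟩
    · subst hx'; subst hu'
      exact Or.inl ⟨s.1, c.1, rfl, rfl,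
        he.imp (fun hb => (hS.1 s c).1.mpr hb) (fun hb => (hS.1 s c).2.mpr hb)⟩
    · subst hx'; subst hu'
      exact Or.inr ⟨s.1, c.1, rfl, rfl,
        he.imp (fun hb => (hS.1 s c).1.mpr hb) (fun hb => (hS.1 s c).2.mpr hb)⟩

/-- reach in `G` lands inside the component, and transfers to `H` -/
lemma reach_sub {G : RBGraph S C}
    {H : RBGraph {s : S // rbk M E (Sum.inl s) = K} {c : C // rbk M E (Sum.inr c) = K}}
    (hI : InvC M E G) (hS : SimC M E K G H) (c : {c : C // rbk M E (Sum.inr c) = K}) (s : S)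
    (h : G.reach c.1 s) : ∃ hs : rbk M E (Sum.inl s) = K, H.reach c ⟨s, hs⟩ := by
  obtain ⟨p⟩ := h
  obtain ⟨hw, hr⟩ := walk_to_sub hI hS p c.2
  exact ⟨hw, hr⟩

lemma reach_iff {G : RBGraph S C}
    {H : RBGraph {s : S // rbk M E (Sum.inl s) = K} {c : C // rbk M E (Sum.inr c) = K}}
    (hI : InvC M E G) (hS : SimC M E K G H) (c : {c : C // rbk M E (Sum.inr c) = K})
    (s : {s : S // rbk M E (Sum.inl s) = K}) :
    G.reach c.1 s.1 ↔ H.reach c s := by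
  constructor
  · intro h
    obtain ⟨hs, hr⟩ := reach_sub hI hS c s.1 h
    exact hr
  · intro h
    obtain ⟨p⟩ := h
    exact walk_from_sub hS p

lemma invC_realize {G : RBGraph S C} (hI : InvC M E G) (c : C) : InvC M E (realize G c) := by
  rcases h : G.charState c with h' | h' | h'
  · rw [realize_inactive G c h]
    intro s c' he
    rcases he with ⟨hb, -⟩ | hr
    · exact hI s c' (Or.inl hb)
    · dsimp only at hr
      by_cases hc : c' = c
      · subst hc
        rw [if_pos rfl] at hr
        rcases hr with hr | ⟨hre, -, -⟩
        · exact hI s c' (Or.inr hr)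
        · exact (comp_eq_of_reachable hI hre).symm
      · rw [if_neg hc] at hr
        exact hI s c' (Or.inr hr)
  · rw [realize_active G c h]
    intro s c' he
    rcases he with hb | ⟨hr, -⟩
    · exact hI s c' (Or.inl hb)
    · exact hI s c' (Or.inr hr)
  · rw [realize_free G c h]; exact hI
lemma val_ne_iff {c' c : {c : C // rbk M E (Sum.inr c) = K}} : c'.1 ≠ c.1 ↔ c' ≠ c :=
  not_congr Subtype.ext_iff |>.symm

lemma simC_realize_notK {G : RBGraph S C}
    {H : RBGraph {s : S // rbk M E (Sum.inl s) = K} {c : C // rbk M E (Sum.inr c) = K}}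
    (hS : SimC M E K G H) (c : C) (hc : rbk M E (Sum.inr c) ≠ K) :
    SimC M E K (realize G c) H := by
  have hne : ∀ c' : {c : C // rbk M E (Sum.inr c) = K}, c'.1 ≠ c :=
    fun c' he => hc (he ▸ c'.2)
  rcases h : G.charState c with h' | h' | h'
  · rw [realize_inactive G c h]
    refine ⟨fun s c' => ?_, fun c' => ?_, fun s c' hin => ?_⟩
    · constructor
      · simp only [hne c', ne_eq, not_false_eq_true, and_true]
        exact (hS.1 s c').1
      · simp only [if_neg (hne c')]
        exact (hS.1 s c').2
    · simp only [if_neg (hne c')]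
      exact hS.2.1 c'
    · simp only [if_neg (hne c')] at hin
      have := hS.2.2 s c' hin
      simp only [Set.mem_union, Set.mem_setOf_eq] at *
      constructor
      · rintro (hm | ⟨he, -⟩)
        · exact this.mp hm
        · exact absurd he (hne c')
      · intro hm
        exact Or.inl (this.mpr hm)
  · rw [realize_active G c h]
    refine ⟨fun s c' => ?_, fun c' => ?_, fun s c' hin => ?_⟩
    · refine ⟨(hS.1 s c').1, ?_⟩
      simp only [hne c', ne_eq, not_false_eq_true, and_true]
      exact (hS.1 s c').2
    · simp only [if_neg (hne c')]
      exact hS.2.1 c'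
    · simp only [if_neg (hne c')] at hin
      exact hS.2.2 s c' hin
  · rw [realize_free G c h]; exact hS

lemma step_inK {G : RBGraph S C}
    {H : RBGraph {s : S // rbk M E (Sum.inl s) = K} {c : C // rbk M E (Sum.inr c) = K}}
    (hI : InvC M E G) (hS : SimC M E K G H) (c : {c : C // rbk M E (Sum.inr c) = K})
    (hp : RealizePossible H c) :
    RealizePossible G c.1 ∧ SimC M E K (realize G c.1) (realize H c) := by
  rcases h : H.charState c with h' | h' | h'
  · -- inactive
    have hG : G.charState c.1 = CharState.inactive := (hS.2.1 c).trans h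
    constructor
    · rw [realizePossible_inactive G c.1 hG]
      intro s hr
      obtain ⟨hs, hHr⟩ := reach_sub hI hS c s hr
      have hnotin := (realizePossible_inactive H c h).mp hp ⟨s, hs⟩ hHr
      exact fun hm => hnotin ((hS.2.2 ⟨s, hs⟩ c hG).mp hm)
    · rw [realize_inactive G c.1 hG, realize_inactive H c h]
      refine ⟨fun s' c' => ?_, fun c' => ?_, fun s' c' hin => ?_⟩
      · constructor
        · exact and_congr ((hS.1 s' c').1) (val_ne_iff)
        · by_cases hcc : c' = c
          · subst hcc
            simp only [if_pos rfl]
            exact or_congr ((hS.1 s' c').2)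
              (and_congr (reach_iff hI hS c' s')
                (and_congr (not_congr (hS.1 s' c').1) (not_congr (hS.1 s' c').2)))
          · dsimp only
            rw [if_neg (val_ne_iff.mpr hcc), if_neg hcc]
            exact (hS.1 s' c').2
      · by_cases hcc : c' = c
        · subst hcc
          dsimp only
          rw [if_pos rfl, if_pos rfl]
        · dsimp only
          rw [if_neg (val_ne_iff.mpr hcc), if_neg hcc]
          exact hS.2.1 c'
      · simp only at hin
        have hcc : c'.1 ≠ c.1 := by
          intro he
          rw [if_pos he] at hin
          exact absurd hin (by simp)
        rw [if_neg hcc] at hin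
        have hbase := hS.2.2 s' c' hin
        simp only [Set.mem_union, Set.mem_setOf_eq]
        constructor
        · rintro (hm | ⟨he, -⟩)
          · exact Or.inl (hbase.mp hm)
          · exact absurd he hcc
        · rintro (hm | ⟨he, -⟩)
          · exact Or.inl (hbase.mpr hm)
          · exact absurd he (val_ne_iff.mp hcc)
  · -- active
    have hG : G.charState c.1 = CharState.active := (hS.2.1 c).trans h
    constructor
    · rw [realizePossible_active G c.1 hG]
      intro s hr
      obtain ⟨hs, hHr⟩ := reach_sub hI hS c s hr
      have hred := (realizePossible_active H c h).mp hp ⟨s, hs⟩ hHr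
      exact (hS.1 ⟨s, hs⟩ c).2.mpr hred
    · rw [realize_active G c.1 hG, realize_active H c h]
      refine ⟨fun s' c' => ?_, fun c' => ?_, fun s' c' hin => ?_⟩
      · exact ⟨(hS.1 s' c').1, and_congr ((hS.1 s' c').2) (val_ne_iff)⟩
      · by_cases hcc : c' = c
        · subst hcc
          dsimp only
          rw [if_pos rfl, if_pos rfl]
        · dsimp only
          rw [if_neg (val_ne_iff.mpr hcc), if_neg hcc]
          exact hS.2.1 c'
      · simp only at hin
        have hcc : c'.1 ≠ c.1 := by
          intro he
          rw [if_pos he] at hin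
          exact absurd hin (by simp)
        rw [if_neg hcc] at hin
        exact hS.2.2 s' c' hin
  · exact absurd hp (by rw [realizePossible_free H c h]; exact not_false)
lemma realizeList_append (G : RBGraph S C) (l₁ l₂ : List C) :
    realizeList G (l₁ ++ l₂) = realizeList (realizeList G l₁) l₂ := by
  induction l₁ generalizing G with
  | nil => rfl
  | cons c l ih => exact ih (realize G c)

lemma allPossible_append (G : RBGraph S C) (l₁ l₂ : List C) :
    AllPossible G (l₁ ++ l₂) ↔ AllPossible G l₁ ∧ AllPossible (realizeList G l₁) l₂ := by
  induction l₁ generalizing G with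
  | nil => simp [AllPossible, realizeList]
  | cons c l ih => simp [AllPossible, realizeList, ih, and_assoc]

lemma invC_realizeList {G : RBGraph S C} (hI : InvC M E G) (l : List C) :
    InvC M E (realizeList G l) := by
  induction l generalizing G with
  | nil => exact hI
  | cons c l ih => exact ih (invC_realize hI c)

lemma simC_realizeList_notK {G : RBGraph S C}
    {H : RBGraph {s : S // rbk M E (Sum.inl s) = K} {c : C // rbk M E (Sum.inr c) = K}}
    (hS : SimC M E K G H) (l : List C) (hl : ∀ c ∈ l, rbk M E (Sum.inr c) ≠ K) :
    SimC M E K (realizeList G l) H := by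
  induction l generalizing G with
  | nil => exact hS
  | cons c l ih =>
    exact ih (simC_realize_notK hS c (hl c (List.mem_cons_self : c ∈ c :: l)))
      (fun c' hc' => hl c' (List.mem_cons_of_mem c hc'))

lemma block_step {H : RBGraph {s : S // rbk M E (Sum.inl s) = K} {c : C // rbk M E (Sum.inr c) = K}}
    (lc : List {c : C // rbk M E (Sum.inr c) = K}) :
    ∀ (G : RBGraph S C), InvC M E G → SimC M E K G H → AllPossible H lc →
      AllPossible G (lc.map Subtype.val) ∧
      SimC M E K (realizeList G (lc.map Subtype.val)) (realizeList H lc) := by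
  induction lc generalizing H with
  | nil => exact fun G hI hS _ => ⟨trivial, hS⟩
  | cons c lc ih =>
    intro G hI hS hA
    obtain ⟨hp, hS'⟩ := step_inK hI hS c hA.1
    obtain ⟨hA', hS''⟩ := ih (realize G c.1) (invC_realize hI c.1) hS' hA.2
    exact ⟨⟨hp, hA'⟩, hS''⟩
variable (M E)

/-- the initial red-black graph of the constrained submatrix of component `K` -/
def initHK (K : (initRB M E).graph.ConnectedComponent) :
    RBGraph {s : S // rbk M E (Sum.inl s) = K} {c : C // rbk M E (Sum.inr c) = K} :=
  initRB (fun s c => M s.1 c.1) {p | (p.1.1, p.2.1) ∈ E}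

def blockC (R : ∀ K : (initRB M E).graph.ConnectedComponent,
      List ({c : C // rbk M E (Sum.inr c) = K} × Bool))
    (K : (initRB M E).graph.ConnectedComponent) : List C :=
  ((R K).map Prod.fst).map Subtype.val

def finHK (R : ∀ K : (initRB M E).graph.ConnectedComponent,
      List ({c : C // rbk M E (Sum.inr c) = K} × Bool))
    (K : (initRB M E).graph.ConnectedComponent) :
    RBGraph {s : S // rbk M E (Sum.inl s) = K} {c : C // rbk M E (Sum.inr c) = K} :=
  realizeList (initHK M E K) ((R K).map Prod.fst)

lemma invC_init : InvC M E (initRB M E) := by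
  intro s c he
  rcases he with hb | hr
  · exact SimpleGraph.ConnectedComponent.sound
      (SimpleGraph.Adj.reachable (Or.inl ⟨s, c, rfl, rfl, Or.inl hb⟩))
  · exact absurd hr not_false

lemma simC_init (K : (initRB M E).graph.ConnectedComponent) :
    SimC M E K (initRB M E) (initHK M E K) :=
  ⟨fun _ _ => ⟨Iff.rfl, Iff.rfl⟩, fun _ => rfl, fun _ _ _ => Iff.rfl⟩

lemma blockC_inK (R : ∀ K : (initRB M E).graph.ConnectedComponent,
      List ({c : C // rbk M E (Sum.inr c) = K} × Bool))
    (K : (initRB M E).graph.ConnectedComponent) :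
    ∀ c ∈ blockC M E R K, rbk M E (Sum.inr c) = K := by
  intro c hc
  simp only [blockC, List.mem_map] at hc
  obtain ⟨c', -, rfl⟩ := hc
  exact c'.2

lemma mainInd (R : ∀ K : (initRB M E).graph.ConnectedComponent,
      List ({c : C // rbk M E (Sum.inr c) = K} × Bool))
    (hA : ∀ K, AllPossible (initHK M E K) ((R K).map Prod.fst)) :
    ∀ (cs : List (initRB M E).graph.ConnectedComponent), cs.Nodup →
      ∀ G : RBGraph S C, InvC M E G →
      (∀ K ∈ cs, SimC M E K G (initHK M E K)) →
      AllPossible G ((cs.map (blockC M E R)).flatten) ∧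
      (∀ K ∈ cs, SimC M E K (realizeList G ((cs.map (blockC M E R)).flatten)) (finHK M E R K)) ∧
      (∀ K, K ∉ cs →
        ∀ H : RBGraph {s : S // rbk M E (Sum.inl s) = K} {c : C // rbk M E (Sum.inr c) = K},
        SimC M E K G H → SimC M E K (realizeList G ((cs.map (blockC M E R)).flatten)) H) := by
  intro cs
  induction cs with
  | nil =>
    intro _ G hI hSims
    exact ⟨trivial, by simp, fun K _ H hS => hS⟩
  | cons K cs ih =>
    intro hnd G hI hSims
    rw [List.nodup_cons] at hnd
    simp only [List.map_cons, List.flatten_cons]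
    obtain ⟨hA1, hS1⟩ := block_step ((R K).map Prod.fst) G hI
      (hSims K (List.mem_cons_self : K ∈ K :: cs)) (hA K)
    have hI₁ : InvC M E (realizeList G (blockC M E R K)) := invC_realizeList hI _
    have hSims' : ∀ K' ∈ cs, SimC M E K' (realizeList G (blockC M E R K)) (initHK M E K') := by
      intro K' hK'
      refine simC_realizeList_notK (hSims K' (List.mem_cons_of_mem K hK')) _ ?_
      intro c hc
      rw [blockC_inK M E R K c hc]
      intro he
      exact hnd.1 (he ▸ hK')
    obtain ⟨hA2, hS2, hpres⟩ := ih hnd.2 (realizeList G (blockC M E R K)) hI₁ hSims'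
    refine ⟨?_, ?_, ?_⟩
    · exact (allPossible_append G _ _).mpr ⟨hA1, hA2⟩
    · intro K'' hK''
      rw [realizeList_append]
      rcases List.mem_cons.mp hK'' with rfl | hK''
      · exact hpres K'' hnd.1 _ hS1
      · exact hS2 K'' hK''
    · intro K'' hK'' H hS
      rw [realizeList_append]
      refine hpres K'' (fun h => hK'' (List.mem_cons_of_mem K h)) H ?_
      refine simC_realizeList_notK hS _ ?_
      intro c hc
      rw [blockC_inK M E R K c hc]
      intro he
      exact hK'' (he ▸ (List.mem_cons_self : K ∈ K :: cs))
lemma sublist_of_get {α : Type*} {l : List α} {u v : α} :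
    ∀ (i j : Fin l.length), (i : ℕ) < (j : ℕ) → l.get i = u → l.get j = v →
    List.Sublist [u, v] l := by
  induction l with
  | nil => exact fun i => absurd i.2 (by simp)
  | cons x t ih =>
    rintro ⟨iv, hi⟩ ⟨jv, hj⟩ hij hu hv
    cases iv with
    | zero =>
      cases jv with
      | zero => exact absurd (show (0:ℕ) < 0 from hij) (by omega)
      | succ jv =>
        have hu' : x = u := hu
        have hvmem : v ∈ t := by
          rw [← hv]; exact t.get_mem ⟨jv, Nat.lt_of_succ_lt_succ hj⟩
        rw [← hu']
        exact (List.singleton_sublist.mpr hvmem).cons₂ x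
    | succ iv =>
      cases jv with
      | zero => exact absurd (show iv + 1 < 0 from hij) (by omega)
      | succ jv =>
        exact (ih ⟨iv, Nat.lt_of_succ_lt_succ hi⟩ ⟨jv, Nat.lt_of_succ_lt_succ hj⟩
          (Nat.lt_of_succ_lt_succ (show iv + 1 < jv + 1 from hij)) hu hv).cons x

lemma get_of_sublist {α : Type*} {l : List α} {u v : α} (h : List.Sublist [u, v] l) :
    ∃ i j : Fin l.length, (i : ℕ) < (j : ℕ) ∧ l.get i = u ∧ l.get j = v := by
  induction l with
  | nil => exact absurd h (by simp)
  | cons x t ih =>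
    cases h with
    | cons _ h' =>
      obtain ⟨⟨iv, hi⟩, ⟨jv, hj⟩, hij, hu, hv⟩ := ih h'
      exact ⟨⟨iv + 1, Nat.succ_lt_succ hi⟩, ⟨jv + 1, Nat.succ_lt_succ hj⟩,
        Nat.succ_lt_succ hij, hu, hv⟩
    | cons_cons _ h' =>
      have hvmem : v ∈ t := List.singleton_sublist.mp h'
      obtain ⟨⟨jv, hj⟩, hv⟩ := List.mem_iff_get.mp hvmem
      exact ⟨⟨0, Nat.succ_pos _⟩, ⟨jv + 1, Nat.succ_lt_succ hj⟩, Nat.succ_pos _, rfl, hv⟩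

lemma sum_le_one_of_single {α : Type*} [DecidableEq α] {l : List α} (hn : l.Nodup)
    (f : α → ℕ) (a : α) (h1 : f a ≤ 1) (h0 : ∀ b ∈ l, b ≠ a → f b = 0) :
    (l.map f).sum ≤ 1 := by
  induction l with
  | nil => simp
  | cons x t ih =>
    rw [List.nodup_cons] at hn
    simp only [List.map_cons, List.sum_cons]
    by_cases hx : x = a
    · subst hx
      have : ∀ n ∈ t.map f, n = 0 := by
        intro n hn'
        obtain ⟨b, hb, rfl⟩ := List.mem_map.mp hn'
        exact h0 b (List.mem_cons_of_mem x hb) (fun he => hn.1 (he ▸ hb))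
      rw [List.sum_eq_zero this]
      omega
    · rw [h0 x (List.mem_cons_self : x ∈ x :: t) hx]
      simpa using ih hn.2 (fun b hb => h0 b (List.mem_cons_of_mem x hb))

lemma count_map_inj {α β : Type*} [BEq α] [LawfulBEq α] [BEq β] [LawfulBEq β]
    (l : List α) (f : α → β) (hf : Function.Injective f) (x : α) :
    (l.map f).count (f x) = l.count x := by
  induction l with
  | nil => rfl
  | cons a t ih =>
    by_cases h : a = x
    · subst h; simp [List.count_cons, ih]
    · have hf' : f a ≠ f x := fun he => h (hf he)
      simp [List.count_cons, ih, h, hf']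
end Stmt10Aux
/-- if each connected component of the red-black graph of
`(M, E)`, viewed as the constrained submatrix induced by its species and
characters, admits a successful c-reduction, then the concatenation of these
reductions (over an enumeration of the components) is a successful c-reduction
of the red-black graph of `(M, E)`. -/
theorem stmt10 {S C : Type*} [Fintype S] [Fintype C] [DecidableEq C]
    (M : S → C → Bool) (E : Set (S × C))
    (hE : ∀ p ∈ E, M p.1 p.2 = false)
    (comps : List (initRB M E).graph.ConnectedComponent)
    (hnodup : comps.Nodup)
    (hall : ∀ K : (initRB M E).graph.ConnectedComponent, K ∈ comps)
    (R : ∀ K : (initRB M E).graph.ConnectedComponent,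
      List ({c : C // (initRB M E).graph.connectedComponentMk (Sum.inr c) = K} × Bool))
    (hR : ∀ K : (initRB M E).graph.ConnectedComponent,
      SuccessfulCReduction
        (fun (s : {s : S // (initRB M E).graph.connectedComponentMk (Sum.inl s) = K})
             (c : {c : C // (initRB M E).graph.connectedComponentMk (Sum.inr c) = K}) =>
          M s.1 c.1)
        {p : {s : S // (initRB M E).graph.connectedComponentMk (Sum.inl s) = K} ×
             {c : C // (initRB M E).graph.connectedComponentMk (Sum.inr c) = K} |
          (p.1.1, p.2.1) ∈ E}
        (R K)) :
    SuccessfulCReduction M E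
      ((comps.map fun K => (R K).map fun p => (p.1.1, p.2)).flatten) := by
  classical
  have hA : ∀ K, AllPossible (initHK M E K) ((R K).map Prod.fst) := fun K => (hR K).2.2.1
  obtain ⟨hAP, hSfin, -⟩ := mainInd M E R hA comps hnodup (initRB M E) (invC_init M E)
    (fun K _ => simC_init M E K)
  have hmap : (((comps.map fun K => (R K).map fun p => (p.1.1, p.2)).flatten).map Prod.fst)
      = (comps.map (blockC M E R)).flatten := by
    have hfun : (List.map Prod.fst ∘ fun K => List.map
        (fun p : {c : C // rbk M E (Sum.inr c) = K} × Bool => ((p.1.1 : C), p.2)) (R K))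
        = blockC M E R := by
      funext K
      simp only [Function.comp_apply, blockC, List.map_map]
      rfl
    rw [List.map_flatten, List.map_map, hfun]
  have hinj : ∀ K, Function.Injective
      (fun p : {c : C // rbk M E (Sum.inr c) = K} × Bool => ((p.1.1 : C), p.2)) := by
    intro K p q h
    have h' : ((p.1.1 : C), p.2) = ((q.1.1 : C), q.2) := h
    obtain ⟨h1, h2⟩ := Prod.mk.inj h'
    exact Prod.ext (Subtype.ext h1) h2
  refine ⟨⟨?_, ?_⟩, ?_, ?_, ?_⟩
  · -- counts ≤ 1
    intro σ
    rw [List.count_flatten, List.map_map]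
    refine sum_le_one_of_single hnodup _ (rbk M E (Sum.inr σ.1)) ?_ ?_
    · obtain ⟨c, b⟩ := σ
      simp only [Function.comp_apply]
      exact le_trans
        (le_of_eq (@count_map_inj _ _ (@instBEqProd _ _ instBEqOfDecidableEq instBEqOfDecidableEq) _ _ _ (R (rbk M E (Sum.inr c))) _ (hinj _) (⟨c, rfl⟩, b)))
        ((hR _).1.1 (⟨c, rfl⟩, b))
    · intro K hK hKne
      simp only [Function.comp_apply]
      rw [List.count_eq_zero]
      intro hmem
      obtain ⟨p, hp, hpe⟩ := List.mem_map.mp hmem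
      have hc : p.1.1 = σ.1 := congrArg Prod.fst hpe
      exact hKne (hc ▸ p.1.2).symm
  · -- c⁻ after c⁺
    intro c hmem
    obtain ⟨lb, hlb, hcin⟩ := List.mem_flatten.mp hmem
    obtain ⟨K, hK, rfl⟩ := List.mem_map.mp hlb
    obtain ⟨p, hp, hpe⟩ := List.mem_map.mp hcin
    have hc : p.1.1 = c := congrArg Prod.fst hpe
    have hb : p.2 = false := congrArg Prod.snd hpe
    have hp' : (p.1, false) ∈ R K := by rw [← hb]; exact hp
    obtain ⟨i, j, hij, hgi, hgj⟩ := (hR K).1.2 p.1 hp'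
    have hsub1 : List.Sublist [(p.1, true), (p.1, false)] (R K) :=
      sublist_of_get i j hij hgi hgj
    have hsub2 := hsub1.map
      (fun q : {c' : C // rbk M E (Sum.inr c') = K} × Bool => ((q.1.1 : C), q.2))
    simp only [List.map_cons, List.map_nil] at hsub2
    rw [hc] at hsub2
    have hsub3 : List.Sublist [(c, true), (c, false)]
        ((comps.map fun K => (R K).map fun p => (p.1.1, p.2)).flatten) :=
      hsub2.trans (List.sublist_flatten_of_mem (List.mem_map.mpr ⟨K, hK, rfl⟩))
    exact get_of_sublist hsub3
  · -- every c⁺ occurs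
    intro c
    have h1 : ((⟨c, rfl⟩ : {c' : C // rbk M E (Sum.inr c') = rbk M E (Sum.inr c)}), true)
        ∈ R (rbk M E (Sum.inr c)) := (hR _).2.1 ⟨c, rfl⟩
    refine List.mem_flatten.mpr ⟨_, List.mem_map.mpr ⟨rbk M E (Sum.inr c), hall _, rfl⟩, ?_⟩
    exact List.mem_map.mpr ⟨(⟨c, rfl⟩, true), h1, rfl⟩
  · -- all realizations possible
    rw [hmap]
    exact hAP
  · -- final graph edgeless
    rw [hmap]
    intro s c
    by_cases h : rbk M E (Sum.inl s) = rbk M E (Sum.inr c)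
    · have hS := hSfin (rbk M E (Sum.inr c)) (hall _)
      have hedg : Edgeless (finHK M E R (rbk M E (Sum.inr c))) := (hR _).2.2.2
      have hE1 := hedg ⟨s, h⟩ ⟨c, rfl⟩
      exact ⟨fun hb => hE1.1 ((hS.1 ⟨s, h⟩ ⟨c, rfl⟩).1.mp hb),
        fun hr => hE1.2 ((hS.1 ⟨s, h⟩ ⟨c, rfl⟩).2.mp hr)⟩
    · have hI : InvC M E (realizeList (initRB M E) ((comps.map (blockC M E R)).flatten)) :=
        invC_realizeList (invC_init M E) _
      exact ⟨fun hb => h (hI s c (Or.inl hb)), fun hr => h (hI s c (Or.inr hr))⟩
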